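/- Let Z_n (n ∈ ℕ) and Z be real-valued random variables, with the Z_n defined on a probability space (Ω, 𝔉, P) and Z defined on a probability space (Ω′, 𝔉′, P′). Suppose that for all δ > 0 and ε > 0 there exist real-valued random variables Y_{n,δ,ε} on (Ω, 𝔉, P) and Y_{δ,ε} on (Ω′, 𝔉′, P′) such that (i) for all n ∈ ℕ, P(|Z_n − Y_{n,δ,ε}| > δ) < ε; (ii) Y_{n,δ,ε} converges in distribution to Y_{δ,ε} as n → ∞; and (iii) P′(|Z − Y_{δ,ε}| > δ) < ε. Then Z_n converges in distribution to Z as n → ∞. -/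

import Mathlib

open MeasureTheory Filter Topology

noncomputable section

/-- Convergence in distribution: the laws converge weakly, i.e. integrals of bounded
continuous functions converge. -/
def ConvInDist {Ω Ω' : Type*} [MeasurableSpace Ω] [MeasurableSpace Ω']
    (P : Measure Ω) (P' : Measure Ω') (W : ℕ → Ω → ℝ) (Wlim : Ω' → ℝ) : Prop :=
  ∀ f : BoundedContinuousFunction ℝ ℝ,
    Tendsto (fun n => ∫ ω, f (W n ω) ∂P) atTop (𝓝 (∫ ω, f (Wlim ω) ∂P'))

/-- Auxiliary: if `X` and `Y` are close in probability, their laws are close in the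
Lévy–Prokhorov distance. -/
lemma levyProkhorovDist_map_le_max {Ω : Type*} [MeasurableSpace Ω]
    (P : Measure Ω) [IsProbabilityMeasure P]
    {X Y : Ω → ℝ} (hX : Measurable X) (hY : Measurable Y) {δ ε : ℝ}
    (hδ : 0 < δ)
    (h : P {ω | δ < |X ω - Y ω|} < ENNReal.ofReal ε) :
    levyProkhorovDist (P.map X) (P.map Y) ≤ max δ ε := by
  have hPX : IsProbabilityMeasure (P.map X) := Measure.isProbabilityMeasure_map hX.aemeasurable
  have hPY : IsProbabilityMeasure (P.map Y) := Measure.isProbabilityMeasure_map hY.aemeasurable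
  apply levyProkhorovDist_le_of_forall_le _ _ (le_max_of_le_left hδ.le)
  intro ε' B hε' B_mble
  rw [Measure.map_apply hX B_mble,
    Measure.map_apply hY Metric.isOpen_thickening.measurableSet]
  set S : Set Ω := {ω | δ < |X ω - Y ω|} with hS
  calc P (X ⁻¹' B) ≤ P (X ⁻¹' B ∩ Sᶜ) + P (X ⁻¹' B \ Sᶜ) :=
        measure_le_inter_add_diff P _ Sᶜ
    _ ≤ P (X ⁻¹' B ∩ Sᶜ) + P S := by
        gcongr
        intro ω hω
        simpa using hω.2
    _ ≤ P (Y ⁻¹' Metric.thickening ε' B) + ENNReal.ofReal ε' := by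
        gcongr
        · intro ω hω
          rcases hω with ⟨hωB, hωS⟩
          have hle : |X ω - Y ω| ≤ δ := by
            simpa [hS] using hωS
          refine Metric.mem_thickening_iff.mpr ⟨X ω, hωB, ?_⟩
          have : dist (Y ω) (X ω) ≤ δ := by
            rw [Real.dist_eq, abs_sub_comm]
            exact hle
          exact this.trans_lt (lt_of_le_of_lt (le_max_left δ ε) hε')
        · exact h.le.trans (ENNReal.ofReal_le_ofReal
            ((le_max_right δ ε).trans hε'.le))

/-- Lemma C.1: if `Z_n` can be approximated in probability, uniformly in
`n`, by random variables `Y_{n,δ,ε}` converging in distribution to `Y_{δ,ε}`, which in turn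
approximate `Z` in probability, then `Z_n` converges in distribution to `Z`. -/
theorem convInDist_of_approximation
    {Ω Ω' : Type*} [MeasurableSpace Ω] [MeasurableSpace Ω']
    (P : Measure Ω) (P' : Measure Ω')
    [IsProbabilityMeasure P] [IsProbabilityMeasure P']
    (Z : ℕ → Ω → ℝ) (Zlim : Ω' → ℝ)
    (hZ : ∀ n, Measurable (Z n)) (hZlim : Measurable Zlim)
    (happrox : ∀ δ > (0:ℝ), ∀ ε > (0:ℝ),
      ∃ (Y : ℕ → Ω → ℝ) (Ylim : Ω' → ℝ),
        (∀ n, Measurable (Y n)) ∧ Measurable Ylim ∧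
        (∀ n, P {ω | δ < |Z n ω - Y n ω|} < ENNReal.ofReal ε) ∧
        ConvInDist P P' Y Ylim ∧
        P' {ω | δ < |Zlim ω - Ylim ω|} < ENNReal.ofReal ε) :
    ConvInDist P P' Z Zlim := by
  -- laws as probability measures
  have hlawZ : ∀ n, IsProbabilityMeasure (P.map (Z n)) :=
    fun n => Measure.isProbabilityMeasure_map (hZ n).aemeasurable
  have hlawZlim : IsProbabilityMeasure (P'.map Zlim) :=
    Measure.isProbabilityMeasure_map hZlim.aemeasurable
  set μ : ℕ → ProbabilityMeasure ℝ := fun n => ⟨P.map (Z n), hlawZ n⟩ with hμ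
  set ν : ProbabilityMeasure ℝ := ⟨P'.map Zlim, hlawZlim⟩ with hν
  -- the identification with the Lévy–Prokhorov metric space
  set toLP : ProbabilityMeasure ℝ → LevyProkhorov (ProbabilityMeasure ℝ) :=
    fun p => LevyProkhorov.ofMeasure p with htoLP
  -- key step: convergence of the laws in the Lévy–Prokhorov metric
  have hLP : Tendsto (fun n => toLP (μ n)) atTop (𝓝 (toLP ν)) := by
    rw [Metric.tendsto_atTop]
    intro η hη
    have hη3 : (0:ℝ) < η / 3 := by linarith
    obtain ⟨Y, Ylim, hYmeas, hYlimmeas, hYZ, hYconv, hYZlim⟩ :=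
      happrox (η/3) hη3 (η/3) hη3
    have hlawY : ∀ n, IsProbabilityMeasure (P.map (Y n)) :=
      fun n => Measure.isProbabilityMeasure_map (hYmeas n).aemeasurable
    have hlawYlim : IsProbabilityMeasure (P'.map Ylim) :=
      Measure.isProbabilityMeasure_map hYlimmeas.aemeasurable
    set σ : ℕ → ProbabilityMeasure ℝ := fun n => ⟨P.map (Y n), hlawY n⟩ with hσ
    set τ : ProbabilityMeasure ℝ := ⟨P'.map Ylim, hlawYlim⟩ with hτ
    -- laws of `Y n` converge weakly to the law of `Ylim`
    have hσweak : Tendsto σ atTop (𝓝 τ) := by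
      rw [ProbabilityMeasure.tendsto_iff_forall_integral_tendsto]
      intro f
      have h1 : ∀ n, ∫ x, f x ∂((σ n : Measure ℝ)) = ∫ ω, f (Y n ω) ∂P := fun n =>
        integral_map (hYmeas n).aemeasurable f.continuous.aestronglyMeasurable
      have h2 : ∫ x, f x ∂((τ : Measure ℝ)) = ∫ ω, f (Ylim ω) ∂P' :=
        integral_map hYlimmeas.aemeasurable f.continuous.aestronglyMeasurable
      simp only [h1, h2]
      exact hYconv f
    -- hence converge in the Lévy–Prokhorov metric
    have hσLP : Tendsto (fun n => toLP (σ n)) atTop (𝓝 (toLP τ)) :=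
      (LevyProkhorov.continuous_ofMeasure_probabilityMeasure.tendsto τ).comp hσweak
    rw [Metric.tendsto_atTop] at hσLP
    obtain ⟨N, hN⟩ := hσLP (η/3) hη3
    refine ⟨N, fun n hn => ?_⟩
    have d1 : dist (toLP (μ n)) (toLP (σ n)) ≤ η / 3 := by
      have := levyProkhorovDist_map_le_max P (hZ n) (hYmeas n) hη3 (hYZ n)
      simpa [LevyProkhorov.dist_probabilityMeasure_def, toLP, hμ, hσ] using this
    have d3 : dist (toLP (τ)) (toLP ν) ≤ η / 3 := by
      have := levyProkhorovDist_map_le_max P' hZlim hYlimmeas hη3 hYZlim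
      have hcomm : levyProkhorovDist (P'.map Ylim) (P'.map Zlim) ≤ η / 3 := by
        rw [levyProkhorovDist_comm]; simpa using this
      simpa [LevyProkhorov.dist_probabilityMeasure_def, toLP, hτ, hν] using hcomm
    calc dist (toLP (μ n)) (toLP ν)
        ≤ dist (toLP (μ n)) (toLP (σ n)) + dist (toLP (σ n)) (toLP τ)
            + dist (toLP τ) (toLP ν) := dist_triangle4 _ _ _ _
      _ < η / 3 + η / 3 + η / 3 :=
          add_lt_add_of_lt_of_le (add_lt_add_of_le_of_lt d1 (hN n hn)) d3
      _ = η := by ring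
  -- transfer back to weak convergence
  have hweak : Tendsto μ atTop (𝓝 ν) := by
    have hcont := LevyProkhorov.continuous_toMeasure_probabilityMeasure
      (Ω := ℝ)
    have := (hcont.tendsto (toLP ν)).comp hLP
    exact this
  intro f
  have := ProbabilityMeasure.tendsto_iff_forall_integral_tendsto.mp hweak f
  have h1 : ∀ n, ∫ x, f x ∂((μ n : Measure ℝ)) = ∫ ω, f (Z n ω) ∂P := fun n =>
    integral_map (hZ n).aemeasurable f.continuous.aestronglyMeasurable
  have h2 : ∫ x, f x ∂((ν : Measure ℝ)) = ∫ ω, f (Zlim ω) ∂P' :=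
    integral_map hZlim.aemeasurable f.continuous.aestronglyMeasurable
  simp only [h1, h2] at this
  exact this
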